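/- Let H be a complex Hilbert space, let P be a bounded self-adjoint operator on H, let |P| denote the positive square root of P², and let T and S be bounded operators on H satisfying T* P = P S. Then (T* |P| T)² ≤ ‖T‖² ‖S‖² P², where ≤ is the Loewner order on bounded self-adjoint operators (A ≤ B iff ⟨(B−A)x, x⟩ ≥ 0 for all x). -/

import Mathlib

noncomputable section

open ContinuousLinearMap
open scoped ComplexOrder

/-- The Loewner order on bounded operators: `A ≤ B` iff `⟨(B-A)x, x⟩ ≥ 0` for all `x`
(the inequality being in the partial order of `ℂ`, which forces the value to be real). -/
def LoewnerLE {H : Type*} [NormedAddCommGroup H] [InnerProductSpace ℂ H]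
    (A B : H →L[ℂ] H) : Prop :=
  ∀ x : H, 0 ≤ (inner ℂ ((B - A) x) x : ℂ)

/-- if `P` is bounded self-adjoint, `|P|` is the positive square root of `P²`,
and `T* P = P S`, then `(T* |P| T)* ≤ ‖T‖² ‖S‖² P²` in the Loewner order. -/
theorem statement10 {H : Type*} [NormedAddCommGroup H] [InnerProductSpace ℂ H]
    [CompleteSpace H]
    (P absP T S : H →L[ℂ] H)
    (hP : IsSelfAdjoint P)
    (habs_sa : IsSelfAdjoint absP)
    (habs_pos : ∀ x : H, 0 ≤ (inner ℂ (absP x) x : ℂ))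
    (habs_sq : absP ∘L absP = P ∘L P)
    (hTS : adjoint T ∘L P = P ∘L S) :
    LoewnerLE ((adjoint T ∘L (absP ∘L T)) ∘L (adjoint T ∘L (absP ∘L T)))
      (((‖T‖ ^ 2 * ‖S‖ ^ 2 : ℝ) : ℂ) • (P ∘L P)) := by
  intro x
  set A := adjoint T ∘L (absP ∘L T) with hA
  -- A is self-adjoint
  have hA_sa : adjoint A = A := by
    rw [hA, adjoint_comp, adjoint_comp, adjoint_adjoint, habs_sa.adjoint_eq,
      comp_assoc]
  -- ⟪A (A x), x⟫ = ‖A x‖²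
  have h1 : (inner ℂ (A (A x)) x : ℂ) = ((‖A x‖ : ℂ) ^ 2) := by
    rw [← adjoint_inner_right A (A x) x, hA_sa, inner_self_eq_norm_sq_to_K]
    norm_cast
  have h2 : (inner ℂ (P (P x)) x : ℂ) = ((‖P x‖ : ℂ) ^ 2) := by
    rw [← adjoint_inner_right P (P x) x, hP.adjoint_eq, inner_self_eq_norm_sq_to_K]
    norm_cast
  -- ‖absP y‖ = ‖P y‖
  have habs_norm : ∀ y : H, ‖absP y‖ = ‖P y‖ := by
    intro y
    have h : (inner ℂ (absP (absP y)) y : ℂ) = inner ℂ (P (P y)) y := by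
      have := congrArg (fun (Q : H →L[ℂ] H) => (inner ℂ (Q y) y : ℂ)) habs_sq
      simpa using this
    have hl : (inner ℂ (absP (absP y)) y : ℂ) = ((‖absP y‖ : ℂ) ^ 2) := by
      rw [← adjoint_inner_right absP (absP y) y, habs_sa.adjoint_eq,
        inner_self_eq_norm_sq_to_K]
      norm_cast
    have hr : (inner ℂ (P (P y)) y : ℂ) = ((‖P y‖ : ℂ) ^ 2) := by
      rw [← adjoint_inner_right P (P y) y, hP.adjoint_eq, inner_self_eq_norm_sq_to_K]
      norm_cast
    have : ((‖absP y‖ : ℂ) ^ 2) = ((‖P y‖ : ℂ) ^ 2) := by rw [← hl, h, hr]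
    have h2' : (‖absP y‖ : ℝ) ^ 2 = (‖P y‖ : ℝ) ^ 2 := by exact_mod_cast this
    nlinarith [norm_nonneg (absP y), norm_nonneg (P y)]
  -- P ∘ T = adjoint S ∘ P
  have hPT : ∀ y : H, P (T y) = adjoint S (P y) := by
    intro y
    have := congrArg ContinuousLinearMap.adjoint hTS
    rw [adjoint_comp, adjoint_comp, adjoint_adjoint, hP.adjoint_eq] at this
    exact congrFun (congrArg DFunLike.coe this) y
  -- key norm estimate
  have hAx : ‖A x‖ ≤ ‖T‖ * ‖S‖ * ‖P x‖ := by
    have e1 : ‖A x‖ ≤ ‖T‖ * ‖absP (T x)‖ := by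
      have := (adjoint T).le_opNorm (absP (T x))
      have hn : ‖adjoint T‖ = ‖T‖ :=
        (ContinuousLinearMap.adjoint : (H →L[ℂ] H) ≃ₗᵢ⋆[ℂ] (H →L[ℂ] H)).norm_map T
      simpa [hA, hn] using this
    have e2 : ‖absP (T x)‖ = ‖adjoint S (P x)‖ := by rw [habs_norm, hPT]
    have e3 : ‖adjoint S (P x)‖ ≤ ‖S‖ * ‖P x‖ := by
      have := (adjoint S).le_opNorm (P x)
      have hn : ‖adjoint S‖ = ‖S‖ :=
        (ContinuousLinearMap.adjoint : (H →L[ℂ] H) ≃ₗᵢ⋆[ℂ] (H →L[ℂ] H)).norm_map S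
      simpa [hn] using this
    calc ‖A x‖ ≤ ‖T‖ * ‖absP (T x)‖ := e1
      _ = ‖T‖ * ‖adjoint S (P x)‖ := by rw [e2]
      _ ≤ ‖T‖ * (‖S‖ * ‖P x‖) := by
          exact mul_le_mul_of_nonneg_left e3 (norm_nonneg T)
      _ = ‖T‖ * ‖S‖ * ‖P x‖ := by ring
  -- put everything together
  have : (inner ℂ (((((‖T‖ ^ 2 * ‖S‖ ^ 2 : ℝ) : ℂ) • (P ∘L P)) - A ∘L A) x) x : ℂ)
      = (((‖T‖ ^ 2 * ‖S‖ ^ 2) * ‖P x‖ ^ 2 - ‖A x‖ ^ 2 : ℝ) : ℂ) := by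
    simp only [ContinuousLinearMap.sub_apply, ContinuousLinearMap.smul_apply,
      ContinuousLinearMap.comp_apply, inner_sub_left, inner_smul_left]
    rw [h1, h2]
    push_cast
    simp only [map_mul, map_pow, Complex.conj_ofReal]
  rw [this, Complex.zero_le_real]
  have hsq : ‖A x‖ ^ 2 ≤ (‖T‖ * ‖S‖ * ‖P x‖) ^ 2 := by
    apply sq_le_sq' _ hAx
    nlinarith [norm_nonneg (A x), norm_nonneg T, norm_nonneg S, norm_nonneg (P x)]
  nlinarith [hsq]

end
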